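/- Every 3-colouring of F_n ⊠ F_n (the strong product of two fans on n+1 vertices) has a monochromatic component with at least (1 − 1/√2)·n vertices. -/

import Mathlib

open SimpleGraph

universe u v

/-- The strong product of two simple graphs. -/
def StrongProd {α : Type u} {β : Type v} (G : SimpleGraph α) (H : SimpleGraph β) :
    SimpleGraph (α × β) where
  Adj x y := (x.1 = y.1 ∧ H.Adj x.2 y.2) ∨ (x.2 = y.2 ∧ G.Adj x.1 y.1) ∨
    (G.Adj x.1 y.1 ∧ H.Adj x.2 y.2)
  symm := by
    constructor
    rintro x y (⟨h1, h2⟩ | ⟨h1, h2⟩ | ⟨h1, h2⟩)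
    · exact Or.inl ⟨h1.symm, h2.symm⟩
    · exact Or.inr (Or.inl ⟨h1.symm, h2.symm⟩)
    · exact Or.inr (Or.inr ⟨h1.symm, h2.symm⟩)
  loopless := by
    constructor
    rintro x (⟨h1, h2⟩ | ⟨h1, h2⟩ | ⟨h1, h2⟩)
    · exact h2.ne rfl
    · exact h2.ne rfl
    · exact h1.ne rfl

/-- The fan graph `F_n`: a path on `n` vertices (vertices `1,…,n`) together with
one dominant vertex (vertex `0`) adjacent to all path vertices. -/
def Fan (n : ℕ) : SimpleGraph (Fin (n + 1)) :=
  SimpleGraph.fromRel (fun u v => u = 0 ∨ u.val + 1 = v.val)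

/-- The cone over `m` disjoint copies of `G`: `m` pairwise disjoint copies of `G`
together with one new vertex adjacent to every vertex of every copy. -/
def GraphCone {V : Type u} (m : ℕ) (G : SimpleGraph V) :
    SimpleGraph (Option (Fin m × V)) where
  Adj x y :=
    match x, y with
    | none, none => False
    | none, some _ => True
    | some _, none => True
    | some (i, _u), some (j, _v) => i = j ∧ G.Adj _u _v
  symm := by
    constructor
    rintro (_ | ⟨i, u⟩) (_ | ⟨j, v⟩) h
    · exact h
    · trivial
    · trivial
    · exact ⟨h.1.symm, h.2.symm⟩
  loopless := by
    constructor
    rintro (_ | ⟨i, u⟩) h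
    · exact h
    · exact h.2.ne rfl

/-- `G` has a tree-decomposition of width at most `t`. -/
def TreewidthLE {V : Type u} (G : SimpleGraph V) (t : ℕ) : Prop :=
  ∃ (ι : Type) (T : SimpleGraph ι) (W : ι → Finset V),
    T.IsTree ∧
    (∀ ⦃u v : V⦄, G.Adj u v → ∃ x, u ∈ W x ∧ v ∈ W x) ∧
    (∀ v : V, (T.induce {x | v ∈ W x}).Connected) ∧
    (∀ x, (W x).card ≤ t + 1)

/-- A set of vertices is monochromatic under a colouring `f`. -/
def IsMonochromatic {V : Type u} {c : ℕ} (f : V → Fin c) (S : Finset V) : Prop :=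
  ∀ u ∈ S, ∀ v ∈ S, f u = f v

/-- Every monochromatic component of the colouring `f` of `G` has at most `k` vertices. -/
def ClusterLE {V : Type u} {c : ℕ} (G : SimpleGraph V) (f : V → Fin c) (k : ℕ) : Prop :=
  ∀ S : Finset V, IsMonochromatic f S → (G.induce (S : Set V)).Connected → S.card ≤ k

/-- Every monochromatic component of the colouring `f` of `G` has at most `b` vertices
(real-valued bound). -/
def ClusterLEReal {V : Type u} {c : ℕ} (G : SimpleGraph V) (f : V → Fin c) (b : ℝ) : Prop :=
  ∀ S : Finset V, IsMonochromatic f S → (G.induce (S : Set V)).Connected → (S.card : ℝ) ≤ b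
open Fin.NatCast
set_option maxHeartbeats 2000000

lemma induce_connected_of_hub {V : Type*} (G : SimpleGraph V) (S : Set V) (z : V) (hz : z ∈ S)
    (h : ∀ v ∈ S, v ≠ z → G.Adj z v) : (G.induce S).Connected := by
  have key : ∀ u : S, (G.induce S).Reachable u ⟨z, hz⟩ := by
    rintro ⟨u, hu⟩
    by_cases h' : u = z
    · subst h'; exact SimpleGraph.Reachable.refl _
    · exact SimpleGraph.Adj.reachable (by exact (h u hu h').symm)
  haveI : Nonempty S := ⟨⟨z, hz⟩⟩
  exact ⟨fun u v => (key u).trans (key v).symm⟩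

lemma induce_connected_two_sided {V : Type*} (G : SimpleGraph V) (S : Set V) (P : V → Prop)
    (h : ∀ u ∈ S, ∀ v ∈ S, P u → ¬ P v → G.Adj u v)
    (hx : ∃ u ∈ S, P u) (hy : ∃ v ∈ S, ¬ P v) : (G.induce S).Connected := by
  obtain ⟨a, ha, hPa⟩ := hx
  obtain ⟨b, hb, hPb⟩ := hy
  have key : ∀ u : S, (G.induce S).Reachable u ⟨a, ha⟩ := by
    rintro ⟨u, hu⟩
    by_cases h' : P u
    · refine (SimpleGraph.Adj.reachable (v := (⟨b, hb⟩ : S)) ?_).trans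
        (SimpleGraph.Adj.reachable ?_)
      · exact h u hu b hb h' hPb
      · exact (h a ha b hb hPa hPb).symm
    · exact SimpleGraph.Adj.reachable (by exact (h a ha u hu hPa h').symm)
  haveI : Nonempty S := ⟨⟨a, ha⟩⟩
  exact ⟨fun u v => (key u).trans (key v).symm⟩

/-- The start of the run (within `K`) containing `j`. -/
def startF (K : Finset ℕ) (j : ℕ) : ℕ :=
  (insert j ((Finset.Icc 1 j).filter (fun r => Finset.Icc r j ⊆ K))).min'
    (Finset.insert_nonempty _ _)

variable {K : Finset ℕ} {j : ℕ}

lemma startF_mem_set : startF K j ∈ insert j ((Finset.Icc 1 j).filter (fun r => Finset.Icc r j ⊆ K)) :=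
  Finset.min'_mem _ _

lemma startF_le : startF K j ≤ j := by
  have := startF_mem_set (K := K) (j := j)
  simp only [Finset.mem_insert, Finset.mem_filter, Finset.mem_Icc] at this
  rcases this with h | h
  · omega
  · omega

lemma startF_Icc_subset (hj : j ∈ K) : Finset.Icc (startF K j) j ⊆ K := by
  have := startF_mem_set (K := K) (j := j)
  simp only [Finset.mem_insert, Finset.mem_filter] at this
  rcases this with h | h
  · rw [h]; intro x hx; simp only [Finset.mem_Icc] at hx
    have : x = j := by omega
    rwa [this]
  · exact h.2

lemma startF_mem (hj : j ∈ K) : startF K j ∈ K :=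
  startF_Icc_subset hj (by simp [Finset.mem_Icc, startF_le])

lemma startF_pos (hK : ∀ x ∈ K, 1 ≤ x) (hj : j ∈ K) : 1 ≤ startF K j :=
  hK _ (startF_mem hj)

lemma startF_min (hr : 1 ≤ r) (hrj : r ≤ j) (hsub : Finset.Icc r j ⊆ K) : startF K j ≤ r := by
  apply Finset.min'_le
  simp [Finset.mem_Icc, hr, hrj, hsub]

lemma startF_pred_not_mem (hK : ∀ x ∈ K, 1 ≤ x) (hj : j ∈ K) : startF K j - 1 ∉ K := by
  intro hmem
  have h1 : 1 ≤ startF K j - 1 := hK _ hmem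
  have h2 : startF K j ≤ j := startF_le
  have hsub : Finset.Icc (startF K j - 1) j ⊆ K := by
    intro x hx
    simp only [Finset.mem_Icc] at hx
    rcases Nat.eq_or_lt_of_le hx.1 with h | h
    · rwa [← h]
    · exact startF_Icc_subset hj (by simp [Finset.mem_Icc]; omega)
  have := startF_min h1 (by omega) hsub
  omega

lemma startF_between (hK : ∀ x ∈ K, 1 ≤ x) (hj : j ∈ K) {r m : ℕ}
    (hr : startF K j = r) (h1 : r ≤ m) (h2 : m ≤ j) : m ∈ K ∧ startF K m = r := by
  have hrpos : 1 ≤ r := hr ▸ startF_pos hK hj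
  have hsub : Finset.Icc r j ⊆ K := hr ▸ startF_Icc_subset hj
  have hmK : m ∈ K := hsub (by simp [Finset.mem_Icc]; omega)
  have hsub' : Finset.Icc r m ⊆ K := fun x hx => hsub (by
    simp only [Finset.mem_Icc] at hx ⊢; omega)
  have hle : startF K m ≤ r := startF_min hrpos h1 hsub'
  have hnot : r - 1 ∉ K := hr ▸ startF_pred_not_mem hK hj
  refine ⟨hmK, ?_⟩
  rcases Nat.eq_or_lt_of_le hle with h | h
  · omega
  · exfalso
    exact hnot (startF_Icc_subset hmK (by simp [Finset.mem_Icc]; omega))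
lemma fan_adj_dom {n : ℕ} (j : Fin (n+1)) (h : j ≠ 0) : (Fan n).Adj 0 j :=
  (SimpleGraph.fromRel_adj _ _ _).2 ⟨fun e => h e.symm, Or.inl (Or.inl rfl)⟩

lemma fan_adj_succ {n : ℕ} (a b : Fin (n+1)) (h : a.val + 1 = b.val) : (Fan n).Adj a b :=
  (SimpleGraph.fromRel_adj _ _ _).2 ⟨fun e => by subst e; omega, Or.inl (Or.inr h)⟩

section Adj
variable {n : ℕ}

lemma sp_adj_00 (v : Fin (n+1) × Fin (n+1)) (h : v ≠ ((0 : Fin (n+1)), (0 : Fin (n+1)))) :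
    (StrongProd (Fan n) (Fan n)).Adj (0, 0) v := by
  by_cases h1 : v.1 = 0
  · left
    refine ⟨h1.symm, fan_adj_dom v.2 ?_⟩
    intro h2; exact h (Prod.ext h1 h2)
  · by_cases h2 : v.2 = 0
    · exact Or.inr (Or.inl ⟨h2.symm, fan_adj_dom v.1 h1⟩)
    · exact Or.inr (Or.inr ⟨fan_adj_dom v.1 h1, fan_adj_dom v.2 h2⟩)

lemma sp_adj_cross (i j : Fin (n+1)) (hi : i ≠ 0) (hj : j ≠ 0) :
    (StrongProd (Fan n) (Fan n)).Adj (0, j) (i, 0) :=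
  Or.inr (Or.inr ⟨fan_adj_dom i hi, (fan_adj_dom j hj).symm⟩)

lemma sp_adj_col_apex (i m : Fin (n+1)) (hi : i ≠ 0) :
    (StrongProd (Fan n) (Fan n)).Adj (i, m) (0, m) :=
  Or.inr (Or.inl ⟨rfl, (fan_adj_dom i hi).symm⟩)

lemma sp_adj_apex_succ (a b : Fin (n+1)) (h : a.val + 1 = b.val) :
    (StrongProd (Fan n) (Fan n)).Adj (0, a) (0, b) :=
  Or.inl ⟨rfl, fan_adj_succ a b h⟩

end Adj
section ColBound
set_option maxHeartbeats 1000000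
open Finset
variable {n : ℕ} (f : Fin (n + 1) × Fin (n + 1) → Fin 3)

/-- Connectivity of a run component. -/
lemma run_connected (c : Fin 3) (K : Finset ℕ)
    (hKdef : K = (Finset.Icc 1 n).filter (fun j : ℕ => f (0, (j : Fin (n+1))) = c)) (r : ℕ)
    (T : Finset (Fin (n+1) × Fin (n+1)))
    (hTdef : T = (Finset.univ.filter (fun v => f v = c ∧ v.2.val ∈ K)).filter
      (fun v => startF K v.2.val = r))
    (hT : T.Nonempty) :
    ((StrongProd (Fan n) (Fan n)).induce (T : Set (Fin (n+1) × Fin (n+1)))).Connected := by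
  have hK1 : ∀ x ∈ K, 1 ≤ x := by intro x hx; rw [hKdef] at hx; simp at hx; omega
  have hKn : ∀ x ∈ K, x ≤ n := by intro x hx; rw [hKdef] at hx; simp at hx; omega
  have hKcol : ∀ x ∈ K, f (0, (x : Fin (n+1))) = c := by
    intro x hx; rw [hKdef] at hx; simp at hx; exact hx.2
  obtain ⟨v0, hv0⟩ := hT
  rw [hTdef] at hv0
  simp only [mem_filter, Finset.mem_univ, true_and] at hv0
  obtain ⟨⟨hv0c, hv0K⟩, hv0s⟩ := hv0
  -- facts about r
  have hrK : r ∈ K := hv0s ▸ startF_mem hv0K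
  have hr1 : 1 ≤ r := hK1 _ hrK
  have hrn : r ≤ n := hKn _ hrK
  have hrlt : r < n + 1 := by omega
  -- the hub
  set hub : Fin (n+1) × Fin (n+1) := ((0 : Fin (n+1)), (r : Fin (n+1))) with hhub
  have hval : ∀ m : ℕ, m ≤ n → ((m : Fin (n+1)) : ℕ) = m := fun m hm =>
    Fin.val_cast_of_lt (by omega)
  have hmemT : ∀ m : ℕ, m ∈ K → startF K m = r →
      ((0 : Fin (n+1)), (m : Fin (n+1))) ∈ T := by
    intro m hm hs
    rw [hTdef]
    simp only [mem_filter, Finset.mem_univ, true_and]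
    rw [hval m (hKn _ hm)]
    exact ⟨⟨hKcol _ hm, hm⟩, hs⟩
  have hrj0 : r ≤ v0.2.val := hv0s ▸ startF_le
  have hhubT : hub ∈ T := hmemT r hrK ((startF_between hK1 hv0K hv0s (le_refl r) hrj0).2)
  -- chain lemma for apexes
  have hmemT' : ∀ v, v ∈ T → v ∈ (T : Set (Fin (n+1) × Fin (n+1))) := fun v hv => Finset.mem_coe.2 hv
  have chain : ∀ m : ℕ, ∀ (hm : m ∈ K) (hs : startF K m = r),
      ((StrongProd (Fan n) (Fan n)).induce (T : Set (Fin (n+1) × Fin (n+1)))).Reachable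
        ⟨((0 : Fin (n+1)), (m : Fin (n+1))), hmemT' _ (hmemT m hm hs)⟩
        ⟨hub, hmemT' _ hhubT⟩ := by
    intro m
    induction m using Nat.strong_induction_on with
    | _ m ih =>
      intro hm hs
      have hrm : r ≤ m := hs ▸ startF_le
      rcases Nat.eq_or_lt_of_le hrm with h | h
      · subst h; exact SimpleGraph.Reachable.refl _
      · obtain ⟨hm1K, hm1s⟩ : m - 1 ∈ K ∧ startF K (m - 1) = r :=
          startF_between hK1 hm hs (by omega) (by omega)
        have hadj : (StrongProd (Fan n) (Fan n)).Adj
            ((0 : Fin (n+1)), ((m - 1 : ℕ) : Fin (n+1))) ((0 : Fin (n+1)), (m : Fin (n+1))) := by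
          apply sp_adj_apex_succ
          rw [hval (m-1) (by have := hKn _ hm; omega), hval m (hKn _ hm)]
          omega
        have step : ((StrongProd (Fan n) (Fan n)).induce
            (T : Set (Fin (n+1) × Fin (n+1)))).Adj
            ⟨((0 : Fin (n+1)), (m : Fin (n+1))), hmemT' _ (hmemT m hm hs)⟩
            ⟨((0 : Fin (n+1)), ((m - 1 : ℕ) : Fin (n+1))), hmemT' _ (hmemT _ hm1K hm1s)⟩ :=
          hadj.symm
        exact step.reachable.trans (ih (m - 1) (by omega) hm1K hm1s)
  -- every vertex reaches the hub
  have key : ∀ v : (T : Set (Fin (n+1) × Fin (n+1))),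
      ((StrongProd (Fan n) (Fan n)).induce (T : Set (Fin (n+1) × Fin (n+1)))).Reachable
        v ⟨hub, hmemT' _ hhubT⟩ := by
    rintro ⟨⟨i, mfin⟩, hv⟩
    have hv' : ((i, mfin) : Fin (n+1) × Fin (n+1)) ∈ T := Finset.mem_coe.1 hv
    rw [hTdef] at hv'
    simp only [Finset.mem_filter, Finset.mem_univ, true_and] at hv'
    obtain ⟨⟨hvc, hvK⟩, hvs⟩ := hv'
    have hmn : mfin.val ≤ n := hKn _ hvK
    have hcast : ((mfin.val : ℕ) : Fin (n+1)) = mfin := Fin.cast_val_eq_self mfin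
    have memv : ((0 : Fin (n+1)), mfin) ∈ (T : Set (Fin (n+1) × Fin (n+1))) := by
      rw [← hcast]; exact hmemT' _ (hmemT _ hvK hvs)
    have hreach : ((StrongProd (Fan n) (Fan n)).induce
        (T : Set (Fin (n+1) × Fin (n+1)))).Reachable
        ⟨((0 : Fin (n+1)), mfin), memv⟩ ⟨hub, hmemT' _ hhubT⟩ := by
      have heq : (⟨((0 : Fin (n+1)), mfin), memv⟩ : (T : Set (Fin (n+1) × Fin (n+1)))) =
          ⟨((0 : Fin (n+1)), ((mfin.val : ℕ) : Fin (n+1))), hmemT' _ (hmemT _ hvK hvs)⟩ :=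
        Subtype.ext (by simp only [Subtype.coe_mk]; rw [hcast])
      rw [heq]
      exact chain mfin.val hvK hvs
    by_cases hi : i = 0
    · subst hi; exact hreach
    · exact (SimpleGraph.Adj.reachable
        (by exact sp_adj_col_apex i mfin hi :
          ((StrongProd (Fan n) (Fan n)).induce (T : Set (Fin (n+1) × Fin (n+1)))).Adj
            ⟨(i, mfin), hv⟩ ⟨((0 : Fin (n+1)), mfin), memv⟩)).trans hreach
  haveI : Nonempty (T : Set (Fin (n+1) × Fin (n+1))) := ⟨⟨hub, hmemT' _ hhubT⟩⟩
  exact ⟨fun u v => (key u).trans (key v).symm⟩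
end ColBound
section ColBound2
open Finset
variable {n : ℕ}

lemma colBound (f : Fin (n + 1) × Fin (n + 1) → Fin 3) (c : Fin 3) (b : ℝ) (hb : 0 ≤ b)
    (hsmall : ∀ S : Finset (Fin (n+1) × Fin (n+1)), IsMonochromatic f S →
      ((StrongProd (Fan n) (Fan n)).induce (S : Set (Fin (n+1) × Fin (n+1)))).Connected →
      (S.card : ℝ) < b) :
    ((Finset.univ.filter (fun v : Fin (n+1) × Fin (n+1) => f v = c ∧
        v.2.val ∈ (Finset.Icc 1 n).filter (fun j : ℕ => f (0, (j : Fin (n+1))) = c))).card : ℝ) ≤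
      ((n + 1 - ((Finset.Icc 1 n).filter (fun j : ℕ => f (0, (j : Fin (n+1))) = c)).card : ℕ) : ℝ) * b := by
  set K := (Finset.Icc 1 n).filter (fun j : ℕ => f (0, (j : Fin (n+1))) = c) with hKdef
  set Nset := Finset.univ.filter (fun v : Fin (n+1) × Fin (n+1) => f v = c ∧ v.2.val ∈ K) with hNdef
  set R := K.filter (fun j => j - 1 ∉ K) with hRdef
  have hK1 : ∀ x ∈ K, 1 ≤ x := by intro x hx; rw [hKdef] at hx; simp at hx; omega
  have hKn : ∀ x ∈ K, x ≤ n := by intro x hx; rw [hKdef] at hx; simp at hx; omega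
  -- R bound
  have hRcard : R.card ≤ n + 1 - K.card := by
    have hinj : Set.InjOn (fun j => j - 1) (R : Set ℕ) := by
      intro x hx y hy hxy
      simp only [Finset.mem_coe, hRdef, Finset.mem_filter] at hx hy
      have hx1 := hK1 _ hx.1
      have hy1 := hK1 _ hy.1
      simp only at hxy
      omega
    have hsub : R.image (fun j => j - 1) ⊆ (Finset.Icc 0 n) \ K := by
      intro x hx
      simp only [Finset.mem_image] at hx
      obtain ⟨j, hj, rfl⟩ := hx
      simp only [hRdef, Finset.mem_filter] at hj
      have hjn : j ≤ n := hKn _ hj.1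
      simp only [Finset.mem_sdiff, Finset.mem_Icc]
      exact ⟨⟨Nat.zero_le _, by omega⟩, hj.2⟩
    have h1 : R.card = (R.image (fun j => j - 1)).card := (Finset.card_image_of_injOn hinj).symm
    have h2 : ((Finset.Icc 0 n) \ K).card = (Finset.Icc 0 n).card - K.card := by
      apply Finset.card_sdiff_of_subset
      intro x hx
      simp only [Finset.mem_Icc]
      have := hK1 _ hx
      rw [hKdef] at hx; simp at hx
      omega
    have h3 : (Finset.Icc 0 n).card = n + 1 := by simp
    have := Finset.card_le_card hsub
    omega
  -- decomposition
  have hNeq : Nset = R.biUnion (fun r => Nset.filter (fun v => startF K v.2.val = r)) := by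
    ext v
    simp only [Finset.mem_biUnion, Finset.mem_filter]
    constructor
    · intro hv
      refine ⟨startF K v.2.val, ?_, hv, rfl⟩
      have hvK : v.2.val ∈ K := by
        rw [hNdef] at hv; simp only [Finset.mem_filter] at hv; exact hv.2.2
      rw [hRdef]
      simp only [Finset.mem_filter]
      exact ⟨startF_mem hvK, startF_pred_not_mem hK1 hvK⟩
    · rintro ⟨r, _, hv, _⟩; exact hv
  have hdisj : ∀ x ∈ R, ∀ y ∈ R, x ≠ y →
      Disjoint (Nset.filter (fun v => startF K v.2.val = x))
        (Nset.filter (fun v => startF K v.2.val = y)) := by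
    intro x _ y _ hxy
    rw [Finset.disjoint_left]
    intro v hv1 hv2
    simp only [Finset.mem_filter] at hv1 hv2
    exact hxy (hv1.2 ▸ hv2.2 ▸ rfl)
  have hcard : Nset.card = ∑ r ∈ R, (Nset.filter (fun v => startF K v.2.val = r)).card := by
    conv_lhs => rw [hNeq]
    exact Finset.card_biUnion hdisj
  have hterm : ∀ r ∈ R, ((Nset.filter (fun v => startF K v.2.val = r)).card : ℝ) ≤ b := by
    intro r _
    by_cases hne : (Nset.filter (fun v => startF K v.2.val = r)).Nonempty
    · apply le_of_lt
      apply hsmall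
      · intro u hu w hw
        simp only [hNdef, Finset.mem_filter] at hu hw
        rw [hu.1.2.1, hw.1.2.1]
      · exact run_connected f c K hKdef r _ rfl hne
    · rw [Finset.not_nonempty_iff_eq_empty] at hne
      rw [hne]
      simpa using hb
  calc ((Nset.card : ℕ) : ℝ) = ∑ r ∈ R, ((Nset.filter (fun v => startF K v.2.val = r)).card : ℝ) := by
        rw [hcard]; push_cast; ring
    _ ≤ ∑ _r ∈ R, b := Finset.sum_le_sum hterm
    _ = (R.card : ℝ) * b := by rw [Finset.sum_const, nsmul_eq_mul]
    _ ≤ ((n + 1 - K.card : ℕ) : ℝ) * b := by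
        apply mul_le_mul_of_nonneg_right _ hb
        exact_mod_cast hRcard
end ColBound2
section Swap
variable {n : ℕ}

lemma sp_adj_swap {u v : Fin (n+1) × Fin (n+1)} (h : (StrongProd (Fan n) (Fan n)).Adj u v) :
    (StrongProd (Fan n) (Fan n)).Adj u.swap v.swap := by
  rcases h with ⟨h1, h2⟩ | ⟨h1, h2⟩ | ⟨h1, h2⟩
  · exact Or.inr (Or.inl ⟨h1, h2⟩)
  · exact Or.inl ⟨h1, h2⟩
  · exact Or.inr (Or.inr ⟨h2, h1⟩)

lemma swap_conn (S : Finset (Fin (n+1) × Fin (n+1)))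
    (h : ((StrongProd (Fan n) (Fan n)).induce (S : Set (Fin (n+1) × Fin (n+1)))).Connected) :
    ((StrongProd (Fan n) (Fan n)).induce
      ((S.image Prod.swap : Finset (Fin (n+1) × Fin (n+1))) : Set (Fin (n+1) × Fin (n+1)))).Connected := by
  have hmem : ∀ v : Fin (n+1) × Fin (n+1), v ∈ S → v.swap ∈ S.image Prod.swap := by
    intro v hv; exact Finset.mem_image_of_mem _ hv
  let φ : ((StrongProd (Fan n) (Fan n)).induce (S : Set (Fin (n+1) × Fin (n+1)))) →g
      ((StrongProd (Fan n) (Fan n)).induce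
        ((S.image Prod.swap : Finset (Fin (n+1) × Fin (n+1))) : Set (Fin (n+1) × Fin (n+1)))) :=
    ⟨fun v => ⟨(v : Fin (n+1) × Fin (n+1)).swap, by
        simpa using hmem _ (Finset.mem_coe.1 v.2)⟩,
     fun {u v} hadj => sp_adj_swap hadj⟩
  apply h.map φ
  rintro ⟨w, hw⟩
  simp only [Finset.coe_image, Set.mem_image, Finset.mem_coe] at hw
  obtain ⟨v, hv, rfl⟩ := hw
  exact ⟨⟨v, hv⟩, rfl⟩
end Swap
section Final
open Finset
variable {n : ℕ}

lemma tricolor_card (s : Finset ℕ) (g : ℕ → Fin 3) (c0 c1 c2 : Fin 3)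
    (h01 : c0 ≠ c1) (h02 : c0 ≠ c2) (h12 : c1 ≠ c2) (hall : ∀ x, x = c0 ∨ x = c1 ∨ x = c2) :
    (s.filter (fun x => g x = c0)).card + (s.filter (fun x => g x = c1)).card
      + (s.filter (fun x => g x = c2)).card = s.card := by
  have e1 : s.filter (fun x => g x = c0) ∪ (s.filter (fun x => g x = c1) ∪ s.filter (fun x => g x = c2)) = s := by
    ext x
    simp only [Finset.mem_union, Finset.mem_filter]
    rcases hall (g x) with h | h | h <;> simp [h] <;> tauto
  have d12 : Disjoint (s.filter (fun x => g x = c1)) (s.filter (fun x => g x = c2)) := by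
    rw [Finset.disjoint_left]
    intro x hx1 hx2
    simp only [Finset.mem_filter] at hx1 hx2
    exact h12 (hx1.2 ▸ hx2.2 ▸ rfl)
  have d012 : Disjoint (s.filter (fun x => g x = c0)) (s.filter (fun x => g x = c1) ∪ s.filter (fun x => g x = c2)) := by
    rw [Finset.disjoint_left]
    intro x hx1 hx2
    simp only [Finset.mem_filter, Finset.mem_union] at hx1 hx2
    rcases hx2 with h | h
    · exact h01 (hx1.2 ▸ h.2 ▸ rfl)
    · exact h02 (hx1.2 ▸ h.2 ▸ rfl)
  calc (s.filter (fun x => g x = c0)).card + (s.filter (fun x => g x = c1)).card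
      + (s.filter (fun x => g x = c2)).card
      = (s.filter (fun x => g x = c0)).card + ((s.filter (fun x => g x = c1)) ∪ (s.filter (fun x => g x = c2))).card := by
        rw [Finset.card_union_of_disjoint d12]; ring
    _ = _ := by rw [← Finset.card_union_of_disjoint d012, e1]

lemma final_contra (hn : 4 ≤ n) (f : Fin (n + 1) × Fin (n + 1) → Fin 3)
    (a : ℝ) (ha1 : 1/4 ≤ a) (ha2 : a ≤ 59/200)
    (hcon : ∀ S : Finset (Fin (n+1) × Fin (n+1)), IsMonochromatic f S →
      ((StrongProd (Fan n) (Fan n)).induce (S : Set (Fin (n+1) × Fin (n+1)))).Connected →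
      (S.card : ℝ) < a * n)
    (c0 x y : Fin 3) (hx0 : x ≠ c0) (hy0 : y ≠ c0) (hxy : x ≠ y)
    (hall : ∀ g : Fin 3, g = c0 ∨ g = x ∨ g = y)
    (hS0 : ((Finset.univ.filter (fun v : Fin (n+1) × Fin (n+1) => f v = c0)).card : ℝ) < a * n)
    (hKx : (n : ℝ) - a * n < (((Finset.Icc 1 n).filter (fun j : ℕ => f (0, (j : Fin (n+1))) = x)).card : ℝ))
    (hIy : (n : ℝ) - a * n < (((Finset.Icc 1 n).filter (fun i : ℕ => f ((i : Fin (n+1)), 0) = y)).card : ℝ)) :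
    False := by
  set K := (Finset.Icc 1 n).filter (fun j : ℕ => f (0, (j : Fin (n+1))) = x) with hKdef
  set I := (Finset.Icc 1 n).filter (fun i : ℕ => f ((i : Fin (n+1)), 0) = y) with hIdef
  have hnR : (4 : ℝ) ≤ (n : ℝ) := by exact_mod_cast hn
  have haN : 0 ≤ a * n := by positivity
  -- bound on N1 via colBound
  have hN1 := colBound f x (a * n) haN hcon
  rw [← hKdef] at hN1
  -- bound on N2 via colBound applied to the swapped colouring
  set f' : Fin (n+1) × Fin (n+1) → Fin 3 := fun v => f v.swap with hf'
  have hcon' : ∀ S : Finset (Fin (n+1) × Fin (n+1)), IsMonochromatic f' S →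
      ((StrongProd (Fan n) (Fan n)).induce (S : Set (Fin (n+1) × Fin (n+1)))).Connected →
      (S.card : ℝ) < a * n := by
    intro S hm hc
    have hmono : IsMonochromatic f (S.image Prod.swap) := by
      intro u hu w hw
      simp only [Finset.mem_image] at hu hw
      obtain ⟨u', hu', rfl⟩ := hu
      obtain ⟨w', hw', rfl⟩ := hw
      exact hm u' hu' w' hw'
    have hcard : (S.image Prod.swap).card = S.card :=
      Finset.card_image_of_injective _ Prod.swap_injective
    have := hcon _ hmono (swap_conn S hc)
    rwa [hcard] at this
  have hN2' := colBound f' y (a * n) haN hcon'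
  have hK'I : (Finset.Icc 1 n).filter (fun i : ℕ => f' (0, (i : Fin (n+1))) = y) = I := rfl
  rw [hK'I] at hN2'
  -- translate N2' to a statement about f
  have hN2 : ((Finset.univ.filter (fun v : Fin (n+1) × Fin (n+1) => f v = y ∧
      v.1.val ∈ I)).card : ℝ) ≤ ((n + 1 - I.card : ℕ) : ℝ) * (a * n) := by
    have hbij : (Finset.univ.filter (fun v : Fin (n+1) × Fin (n+1) => f' v = y ∧ v.2.val ∈ I)).card
        = (Finset.univ.filter (fun v : Fin (n+1) × Fin (n+1) => f v = y ∧ v.1.val ∈ I)).card := by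
      apply Finset.card_bij (fun v _ => v.swap)
      · intro v hv
        simp only [Finset.mem_filter, Finset.mem_univ, true_and] at hv ⊢
        exact hv
      · intro u _ v _ huv
        exact Prod.swap_injective huv
      · intro w hw
        refine ⟨w.swap, ?_, by simp⟩
        simp only [Finset.mem_filter, Finset.mem_univ, true_and] at hw ⊢
        exact hw
    rw [← hbij]
    exact hN2'
  -- the product set
  set Q := (I ×ˢ K).image (fun p : ℕ × ℕ => ((p.1 : Fin (n+1)), (p.2 : Fin (n+1)))) with hQdef
  have hKmem : ∀ j ∈ K, 1 ≤ j ∧ j ≤ n := by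
    intro j hj; rw [hKdef] at hj; simp at hj; omega
  have hImem : ∀ i ∈ I, 1 ≤ i ∧ i ≤ n := by
    intro i hi; rw [hIdef] at hi; simp at hi; omega
  have hQcard : Q.card = I.card * K.card := by
    rw [hQdef, Finset.card_image_of_injOn, Finset.card_product]
    intro p hp q hq hpq
    simp only [Finset.mem_coe, Finset.mem_product] at hp hq
    have h1 := hImem _ hp.1; have h2 := hKmem _ hp.2
    have h3 := hImem _ hq.1; have h4 := hKmem _ hq.2
    have hpq' : ((p.1 : Fin (n+1)), (p.2 : Fin (n+1))) = ((q.1 : Fin (n+1)), (q.2 : Fin (n+1))) := hpq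
    have e1 : ((p.1 : Fin (n+1)) : ℕ) = ((q.1 : Fin (n+1)) : ℕ) := congrArg (fun z : Fin (n+1) × Fin (n+1) => z.1.val) hpq'
    have e2 : ((p.2 : Fin (n+1)) : ℕ) = ((q.2 : Fin (n+1)) : ℕ) := congrArg (fun z : Fin (n+1) × Fin (n+1) => z.2.val) hpq'
    rw [Fin.val_cast_of_lt (by omega), Fin.val_cast_of_lt (by omega)] at e1
    rw [Fin.val_cast_of_lt (by omega), Fin.val_cast_of_lt (by omega)] at e2
    exact Prod.ext e1 e2
  have hQsub : Q ⊆ (Finset.univ.filter (fun v : Fin (n+1) × Fin (n+1) => f v = c0))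
      ∪ ((Finset.univ.filter (fun v : Fin (n+1) × Fin (n+1) => f v = x ∧ v.2.val ∈ K))
      ∪ (Finset.univ.filter (fun v : Fin (n+1) × Fin (n+1) => f v = y ∧ v.1.val ∈ I))) := by
    intro v hv
    rw [hQdef] at hv
    simp only [Finset.mem_image] at hv
    obtain ⟨p, hp, rfl⟩ := hv
    simp only [Finset.mem_product] at hp
    have h1 := hImem _ hp.1; have h2 := hKmem _ hp.2
    simp only [Finset.mem_union, Finset.mem_filter, Finset.mem_univ, true_and]
    rcases hall (f ((p.1 : Fin (n+1)), (p.2 : Fin (n+1)))) with h | h | h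
    · exact Or.inl h
    · refine Or.inr (Or.inl ⟨h, ?_⟩)
      rw [Fin.val_cast_of_lt (by omega)]
      exact hp.2
    · refine Or.inr (Or.inr ⟨h, ?_⟩)
      rw [Fin.val_cast_of_lt (by omega)]
      exact hp.1
  have hQle : Q.card ≤ (Finset.univ.filter (fun v : Fin (n+1) × Fin (n+1) => f v = c0)).card
      + ((Finset.univ.filter (fun v : Fin (n+1) × Fin (n+1) => f v = x ∧ v.2.val ∈ K)).card
      + (Finset.univ.filter (fun v : Fin (n+1) × Fin (n+1) => f v = y ∧ v.1.val ∈ I)).card) :=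
    le_trans (Finset.card_le_card hQsub)
      (le_trans (Finset.card_union_le _ _) (by gcongr; exact Finset.card_union_le _ _))
  -- cardinality bounds for K and I
  have hKn : K.card ≤ n := le_trans (Finset.card_filter_le _ _) (by simp)
  have hIn : I.card ≤ n := le_trans (Finset.card_filter_le _ _) (by simp)
  -- assemble
  have hKc : ((n + 1 - K.card : ℕ) : ℝ) = (n : ℝ) + 1 - K.card := by
    have : K.card ≤ n + 1 := by omega
    push_cast [Nat.cast_sub this]
    ring
  have hIc : ((n + 1 - I.card : ℕ) : ℝ) = (n : ℝ) + 1 - I.card := by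
    have : I.card ≤ n + 1 := by omega
    push_cast [Nat.cast_sub this]
    ring
  rw [hKc] at hN1
  rw [hIc] at hN2
  have hQR : ((I.card : ℝ) * K.card : ℝ) ≤
      ((Finset.univ.filter (fun v : Fin (n+1) × Fin (n+1) => f v = c0)).card : ℝ)
      + (((Finset.univ.filter (fun v : Fin (n+1) × Fin (n+1) => f v = x ∧ v.2.val ∈ K)).card : ℝ)
      + ((Finset.univ.filter (fun v : Fin (n+1) × Fin (n+1) => f v = y ∧ v.1.val ∈ I)).card : ℝ)) := by
    exact_mod_cast hQcard ▸ hQle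
  have hKnR : (K.card : ℝ) ≤ n := by exact_mod_cast hKn
  have hInR : (I.card : ℝ) ≤ n := by exact_mod_cast hIn
  set kk := (K.card : ℝ) with hkk
  set ii := (I.card : ℝ) with hii
  set N := (n : ℝ) with hN
  set A := a * (n : ℝ) with hA
  have hNpos : (0:ℝ) < N := by linarith
  have hu : (0:ℝ) < kk - (N - A) := by linarith
  have hv : (0:ℝ) < ii - (N - A) := by linarith
  have hAub : A ≤ (59/200) * N := by
    rw [hA]
    apply mul_le_mul_of_nonneg_right ha2
    linarith
  have key : (N - A)^2 - 2*A^2 - 3*A ≥ 0 := by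
    nlinarith [mul_nonneg (sub_nonneg.2 hAub) (by positivity : (0:ℝ) ≤ 2*N + (59/200)*N + A + 3),
      mul_nonneg (by linarith : (0:ℝ) ≤ N - 4) hNpos.le, haN]
  nlinarith [key, mul_pos hu hv, mul_pos hNpos hu, mul_pos hNpos hv, haN]
end Final

/-- Every 3-colouring of `F_n ⊠ F_n` has a monochromatic component with at least
`(1 − 1/√2)·n` vertices. -/
theorem three_colour_fan_fan (n : ℕ) (f : Fin (n + 1) × Fin (n + 1) → Fin 3) :
    ∃ S : Finset (Fin (n + 1) × Fin (n + 1)), IsMonochromatic f S ∧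
      ((StrongProd (Fan n) (Fan n)).induce (S : Set (Fin (n + 1) × Fin (n + 1)))).Connected ∧
      (1 - 1 / Real.sqrt 2) * (n : ℝ) ≤ (S.card : ℝ) := by
  by_contra hcontra
  push_neg at hcontra
  have hspos : (0:ℝ) < Real.sqrt 2 := Real.sqrt_pos.2 (by norm_num)
  have hsq : Real.sqrt 2 * Real.sqrt 2 = 2 := Real.mul_self_sqrt (by norm_num)
  have hslb : (4:ℝ)/3 ≤ Real.sqrt 2 := by nlinarith [hsq, hspos]
  have hsub : Real.sqrt 2 ≤ 200/141 := by nlinarith [hsq, hspos]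
  have hA1 : (1:ℝ)/4 ≤ 1 - 1 / Real.sqrt 2 := by
    have : 1 / Real.sqrt 2 ≤ 1 / ((4:ℝ)/3) := one_div_le_one_div_of_le (by norm_num) hslb
    rw [show (1:ℝ) / ((4:ℝ)/3) = 3/4 by norm_num] at this
    linarith
  have hA2 : 1 - 1 / Real.sqrt 2 ≤ (59:ℝ)/200 := by
    have : 1 / ((200:ℝ)/141) ≤ 1 / Real.sqrt 2 := one_div_le_one_div_of_le hspos hsub
    rw [show (1:ℝ) / ((200:ℝ)/141) = 141/200 by norm_num] at this
    linarith
  obtain ⟨a, ha1, ha2, hcon⟩ : ∃ a : ℝ, 1/4 ≤ a ∧ a ≤ 59/200 ∧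
      ∀ S : Finset (Fin (n+1) × Fin (n+1)), IsMonochromatic f S →
      ((StrongProd (Fan n) (Fan n)).induce (S : Set (Fin (n+1) × Fin (n+1)))).Connected →
      (S.card : ℝ) < a * n := ⟨1 - 1 / Real.sqrt 2, hA1, hA2, hcontra⟩
  -- small case
  by_cases hn : n ≤ 3
  · have h1 : (1:ℝ) < a * n := by
      have := hcon {((0 : Fin (n+1)), (0 : Fin (n+1)))} (by intro u hu v hv; simp at hu hv; rw [hu, hv])
        (by
          apply induce_connected_of_hub _ _ ((0 : Fin (n+1)), (0 : Fin (n+1))) (by simp)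
          intro v hv hne
          exfalso
          exact hne (by simpa using hv))
      simpa using this
    have hnr : (n:ℝ) ≤ 3 := by exact_mod_cast hn
    have hn0 : (0:ℝ) ≤ (n:ℝ) := Nat.cast_nonneg n
    nlinarith [mul_nonneg (by linarith : (0:ℝ) ≤ 59/200 - a) hn0]
  push_neg at hn
  have hn4 : 4 ≤ n := hn
  have hnR : (4:ℝ) ≤ (n:ℝ) := by exact_mod_cast hn4
  have haN : (0:ℝ) < a * n := mul_pos (by linarith) (by linarith)
  -- the three colours
  set c0 : Fin 3 := f (0, 0) with hc0
  obtain ⟨c1, c2, h01, h02, h12, hall⟩ : ∃ c1 c2 : Fin 3, c0 ≠ c1 ∧ c0 ≠ c2 ∧ c1 ≠ c2 ∧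
      ∀ g : Fin 3, g = c0 ∨ g = c1 ∨ g = c2 := by
    have : ∀ c : Fin 3, ∃ c1 c2 : Fin 3, c ≠ c1 ∧ c ≠ c2 ∧ c1 ≠ c2 ∧
        ∀ g : Fin 3, g = c ∨ g = c1 ∨ g = c2 := by decide
    exact this c0
  -- the colour class of c0 is connected through (0,0)
  set S0 := Finset.univ.filter (fun v : Fin (n+1) × Fin (n+1) => f v = c0) with hS0def
  have hS0mem : ((0 : Fin (n+1)), (0 : Fin (n+1))) ∈ S0 := by
    rw [hS0def]; simp [hc0]
  have hS0 : ((S0.card : ℕ) : ℝ) < a * n := by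
    apply hcon
    · intro u hu v hv
      rw [hS0def] at hu hv
      simp only [Finset.mem_filter] at hu hv
      rw [hu.2, hv.2]
    · apply induce_connected_of_hub _ _ ((0 : Fin (n+1)), (0 : Fin (n+1)))
        (Finset.mem_coe.2 hS0mem)
      intro v hv hne
      exact sp_adj_00 v hne
  -- row-0 and column-0 colour sets
  set K := fun c : Fin 3 => (Finset.Icc 1 n).filter (fun j : ℕ => f (0, (j : Fin (n+1))) = c) with hKdef
  set I := fun c : Fin 3 => (Finset.Icc 1 n).filter (fun i : ℕ => f ((i : Fin (n+1)), 0) = c) with hIdef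
  have hKsum : (K c0).card + (K c1).card + (K c2).card = n := by
    rw [hKdef]
    rw [tricolor_card (Finset.Icc 1 n) (fun j : ℕ => f (0, (j : Fin (n+1)))) c0 c1 c2 h01 h02 h12 hall]
    simp
  have hIsum : (I c0).card + (I c1).card + (I c2).card = n := by
    rw [hIdef]
    rw [tricolor_card (Finset.Icc 1 n) (fun i : ℕ => f ((i : Fin (n+1)), 0)) c0 c1 c2 h01 h02 h12 hall]
    simp
  have hKval : ∀ c : Fin 3, ∀ j ∈ K c, 1 ≤ j ∧ j ≤ n ∧ f (0, (j : Fin (n+1))) = c := by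
    intro c j hj; rw [hKdef] at hj; simp only [Finset.mem_filter, Finset.mem_Icc] at hj; tauto
  have hIval : ∀ c : Fin 3, ∀ i ∈ I c, 1 ≤ i ∧ i ≤ n ∧ f ((i : Fin (n+1)), 0) = c := by
    intro c i hi; rw [hIdef] at hi; simp only [Finset.mem_filter, Finset.mem_Icc] at hi; tauto
  -- the c0 sets on the arms are dominated by S0
  have hK0 : ((K c0).card : ℝ) < a * n := by
    refine lt_of_le_of_lt ?_ hS0
    have : (K c0).card ≤ S0.card := by
      refine Finset.card_le_card_of_injOn (fun j : ℕ => ((0 : Fin (n+1)), (j : Fin (n+1)))) ?_ ?_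
      · intro j hj
        rw [hS0def]
        exact Finset.mem_filter.2 ⟨Finset.mem_univ _, (hKval c0 j hj).2.2⟩
      · intro p hp q hq hpq
        obtain ⟨hp1, hp2, -⟩ := hKval c0 _ (Finset.mem_coe.1 hp)
        obtain ⟨hq1, hq2, -⟩ := hKval c0 _ (Finset.mem_coe.1 hq)
        have : ((p : Fin (n+1)) : ℕ) = ((q : Fin (n+1)) : ℕ) := by
          have := congrArg (fun z : Fin (n+1) × Fin (n+1) => z.2.val) hpq
          simpa using this
        rwa [Fin.val_cast_of_lt (by omega), Fin.val_cast_of_lt (by omega)] at this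
    exact_mod_cast this
  have hI0 : ((I c0).card : ℝ) < a * n := by
    refine lt_of_le_of_lt ?_ hS0
    have : (I c0).card ≤ S0.card := by
      refine Finset.card_le_card_of_injOn (fun i : ℕ => ((i : Fin (n+1)), (0 : Fin (n+1)))) ?_ ?_
      · intro i hi
        rw [hS0def]
        exact Finset.mem_filter.2 ⟨Finset.mem_univ _, (hIval c0 i hi).2.2⟩
      · intro p hp q hq hpq
        obtain ⟨hp1, hp2, -⟩ := hIval c0 _ (Finset.mem_coe.1 hp)
        obtain ⟨hq1, hq2, -⟩ := hIval c0 _ (Finset.mem_coe.1 hq)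
        have : ((p : Fin (n+1)) : ℕ) = ((q : Fin (n+1)) : ℕ) := by
          have := congrArg (fun z : Fin (n+1) × Fin (n+1) => z.1.val) hpq
          simpa using this
        rwa [Fin.val_cast_of_lt (by omega), Fin.val_cast_of_lt (by omega)] at this
    exact_mod_cast this
  -- a colour meeting both arms has small total arm count
  have hUboth : ∀ c : Fin 3, (K c).Nonempty → (I c).Nonempty →
      ((K c).card : ℝ) + ((I c).card : ℝ) < a * n := by
    intro c hKne hIne
    set U := Finset.univ.filter (fun v : Fin (n+1) × Fin (n+1) => f v = c ∧
      ((v.1 = 0 ∧ v.2 ≠ 0) ∨ (v.2 = 0 ∧ v.1 ≠ 0))) with hUdef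
    have hfin : ∀ m : ℕ, 1 ≤ m → m ≤ n → ((m : Fin (n+1)) ≠ 0) := by
      intro m h1 h2 heq
      have := congrArg Fin.val heq
      rw [Fin.val_cast_of_lt (by omega)] at this
      simp at this
      omega
    -- the union of images is inside U
    have hsubU : ((K c).image (fun j : ℕ => ((0 : Fin (n+1)), (j : Fin (n+1))))) ∪
        ((I c).image (fun i : ℕ => ((i : Fin (n+1)), (0 : Fin (n+1))))) ⊆ U := by
      intro v hv
      rw [Finset.mem_union] at hv
      rw [hUdef]
      simp only [Finset.mem_filter, Finset.mem_univ, true_and]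
      rcases hv with hv | hv
      · simp only [Finset.mem_image] at hv
        obtain ⟨j, hj, rfl⟩ := hv
        obtain ⟨hj1, hj2, hj3⟩ := hKval c _ hj
        exact ⟨hj3, Or.inl ⟨rfl, hfin j hj1 hj2⟩⟩
      · simp only [Finset.mem_image] at hv
        obtain ⟨i, hi, rfl⟩ := hv
        obtain ⟨hi1, hi2, hi3⟩ := hIval c _ hi
        exact ⟨hi3, Or.inr ⟨rfl, hfin i hi1 hi2⟩⟩
    have hdisjU : Disjoint ((K c).image (fun j : ℕ => ((0 : Fin (n+1)), (j : Fin (n+1)))))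
        ((I c).image (fun i : ℕ => ((i : Fin (n+1)), (0 : Fin (n+1))))) := by
      rw [Finset.disjoint_left]
      intro v hv1 hv2
      simp only [Finset.mem_image] at hv1 hv2
      obtain ⟨j, hj, rfl⟩ := hv1
      obtain ⟨i, hi, he⟩ := hv2
      obtain ⟨hi1, hi2, _⟩ := hIval c _ hi
      have := congrArg (fun z : Fin (n+1) × Fin (n+1) => z.1) he
      simp only at this
      exact hfin i hi1 hi2 this
    have hcardim1 : ((K c).image (fun j : ℕ => ((0 : Fin (n+1)), (j : Fin (n+1))))).card = (K c).card := by
      apply Finset.card_image_of_injOn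
      intro p hp q hq hpq
      obtain ⟨hp1, hp2, _⟩ := hKval c _ (Finset.mem_coe.1 hp)
      obtain ⟨hq1, hq2, _⟩ := hKval c _ (Finset.mem_coe.1 hq)
      have : ((p : Fin (n+1)) : ℕ) = ((q : Fin (n+1)) : ℕ) := by
        have := congrArg (fun z : Fin (n+1) × Fin (n+1) => z.2.val) hpq
        simpa using this
      rwa [Fin.val_cast_of_lt (by omega), Fin.val_cast_of_lt (by omega)] at this
    have hcardim2 : ((I c).image (fun i : ℕ => ((i : Fin (n+1)), (0 : Fin (n+1))))).card = (I c).card := by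
      apply Finset.card_image_of_injOn
      intro p hp q hq hpq
      obtain ⟨hp1, hp2, _⟩ := hIval c _ (Finset.mem_coe.1 hp)
      obtain ⟨hq1, hq2, _⟩ := hIval c _ (Finset.mem_coe.1 hq)
      have : ((p : Fin (n+1)) : ℕ) = ((q : Fin (n+1)) : ℕ) := by
        have := congrArg (fun z : Fin (n+1) × Fin (n+1) => z.1.val) hpq
        simpa using this
      rwa [Fin.val_cast_of_lt (by omega), Fin.val_cast_of_lt (by omega)] at this
    have hcardle : (K c).card + (I c).card ≤ U.card := by
      rw [← hcardim1, ← hcardim2, ← Finset.card_union_of_disjoint hdisjU]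
      exact Finset.card_le_card hsubU
    -- U is monochromatic and connected
    have hUcon : ((StrongProd (Fan n) (Fan n)).induce (U : Set (Fin (n+1) × Fin (n+1)))).Connected := by
      apply induce_connected_two_sided _ _ (fun v => v.1 = 0)
      · rintro ⟨u1, u2⟩ hu ⟨v1, v2⟩ hv hPu hPv
        rw [Finset.mem_coe, hUdef] at hu hv
        have hu' := (Finset.mem_filter.1 hu).2
        have hv' := (Finset.mem_filter.1 hv).2
        simp only at hPu hPv
        subst hPu
        rcases hu'.2 with ⟨_, hu2⟩ | ⟨_, h0⟩
        · rcases hv'.2 with ⟨hv1, _⟩ | ⟨hv2, hv1⟩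
          · exact absurd hv1 hPv
          · subst hv2
            exact sp_adj_cross v1 u2 hv1 hu2
        · exact absurd rfl h0
      · obtain ⟨j, hj⟩ := hKne
        obtain ⟨hj1, hj2, hj3⟩ := hKval c _ hj
        refine ⟨((0 : Fin (n+1)), (j : Fin (n+1))), ?_, rfl⟩
        rw [Finset.mem_coe, hUdef]
        exact Finset.mem_filter.2 ⟨Finset.mem_univ _, hj3, Or.inl ⟨rfl, hfin j hj1 hj2⟩⟩
      · obtain ⟨i, hi⟩ := hIne
        obtain ⟨hi1, hi2, hi3⟩ := hIval c _ hi
        refine ⟨(((i : ℕ) : Fin (n+1)), (0 : Fin (n+1))), ?_, ?_⟩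
        · rw [Finset.mem_coe, hUdef]
          exact Finset.mem_filter.2 ⟨Finset.mem_univ _, hi3, Or.inr ⟨rfl, hfin i hi1 hi2⟩⟩
        · simp only
          exact hfin i hi1 hi2
    have hUmono : IsMonochromatic f U := by
      intro u hu v hv
      rw [hUdef] at hu hv
      simp only [Finset.mem_filter] at hu hv
      rw [hu.2.1, hv.2.1]
    have := hcon U hUmono hUcon
    have hc2 : ((K c).card : ℝ) + ((I c).card : ℝ) ≤ (U.card : ℝ) := by exact_mod_cast hcardle
    linarith
  -- convenient real versions
  have hKsumR : ((K c0).card : ℝ) + ((K c1).card : ℝ) + ((K c2).card : ℝ) = (n : ℝ) := by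
    exact_mod_cast hKsum
  have hIsumR : ((I c0).card : ℝ) + ((I c1).card : ℝ) + ((I c2).card : ℝ) = (n : ℝ) := by
    exact_mod_cast hIsum
  have hanub : a * n ≤ (59/200) * (n:ℝ) := mul_le_mul_of_nonneg_right ha2 (by linarith)
  have h2a : a * n + a * n ≤ (n : ℝ) := by linarith
  have hposgap : (0:ℝ) < (n : ℝ) - a * n := by linarith
  have posK : ∀ c : Fin 3, (0:ℝ) < ((K c).card : ℝ) → (K c).Nonempty := by
    intro c h
    rw [← Finset.card_pos]
    exact_mod_cast h
  have posI : ∀ c : Fin 3, (0:ℝ) < ((I c).card : ℝ) → (I c).Nonempty := by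
    intro c h
    rw [← Finset.card_pos]
    exact_mod_cast h
  have hKnn : ∀ c : Fin 3, (0:ℝ) ≤ ((K c).card : ℝ) := fun c => Nat.cast_nonneg _
  have hInn : ∀ c : Fin 3, (0:ℝ) ≤ ((I c).card : ℝ) := fun c => Nat.cast_nonneg _
  have hemptyK : ∀ c : Fin 3, ¬ (K c).Nonempty → ((K c).card : ℝ) = 0 := by
    intro c h
    rw [Finset.not_nonempty_iff_eq_empty] at h
    rw [h]
    simp
  have hemptyI : ∀ c : Fin 3, ¬ (I c).Nonempty → ((I c).card : ℝ) = 0 := by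
    intro c h
    rw [Finset.not_nonempty_iff_eq_empty] at h
    rw [h]
    simp
  by_cases hI1 : (I c1).Nonempty
  · by_cases hK2 : (K c2).Nonempty
    · by_cases hI2 : (I c2).Nonempty
      · -- all three colours too small on row 0: contradiction with hKsum
        have hK2' : ((K c2).card : ℝ) < a * n := by
          have := hUboth c2 hK2 hI2
          linarith [hInn c2]
        have hK1' : ((K c1).card : ℝ) < a * n := by
          by_cases hK1 : (K c1).Nonempty
          · have := hUboth c1 hK1 hI1
            linarith [hInn c1]
          · rw [hemptyK c1 hK1]
            exact haN
        linarith
      · -- I c2 empty: use x := c2 (columns), y := c1 (rows)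
        have hI1big : (n:ℝ) - a * n < ((I c1).card : ℝ) := by
          have := hemptyI c2 hI2
          linarith
        have hK1emp : ¬ (K c1).Nonempty := by
          intro hK1
          have := hUboth c1 hK1 hI1
          linarith
        have hK2big : (n:ℝ) - a * n < ((K c2).card : ℝ) := by
          have := hemptyK c1 hK1emp
          linarith
        exact final_contra hn4 f a ha1 ha2 hcon c0 c2 c1 (Ne.symm h02) (Ne.symm h01) (Ne.symm h12)
          (fun g => by rcases hall g with h | h | h <;> tauto) hS0 hK2big hI1big
    · -- K c2 empty
      have hK1big : (n:ℝ) - a * n < ((K c1).card : ℝ) := by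
        have := hemptyK c2 hK2
        linarith
      have hK1 : (K c1).Nonempty := posK c1 (by linarith)
      have := hUboth c1 hK1 hI1
      linarith [hInn c1]
  · -- I c1 empty: use x := c1, y := c2
    have hI2big : (n:ℝ) - a * n < ((I c2).card : ℝ) := by
      have := hemptyI c1 hI1
      linarith
    have hK2emp : ¬ (K c2).Nonempty := by
      intro hK2
      have hI2 : (I c2).Nonempty := posI c2 (by linarith)
      have := hUboth c2 hK2 hI2
      linarith [hKnn c2]
    have hK1big : (n:ℝ) - a * n < ((K c1).card : ℝ) := by
      have := hemptyK c2 hK2emp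
      linarith
    exact final_contra hn4 f a ha1 ha2 hcon c0 c1 c2 (Ne.symm h01) (Ne.symm h02) h12
      hall hS0 hK1big hI2big
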